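/- Worst-case substitution datasets for a single iteration of the without-replacement subsampled Gaussian mechanism at ε ≥ 0: let σ > 0, let n, b be integers with 1 ≤ b ≤ n, and set γ := b/n. For every pair of tuples D, D' ∈ [−1,1]^n differing in exactly one entry and every α ≥ 1, H_α(M_{n,b}(D) ‖ M_{n,b}(D')) ≤ H_α((1−γ)·N(−b,σ²) + γ·N(2−b,σ²) ‖ N(−b,σ²)). Moreover this bound is realized: for D = (−1,…,−1,1) and D' = (−1,…,−1,−1), M_{n,b}(D) = (1−γ)·N(−b,σ²) + γ·N(2−b,σ²) and M_{n,b}(D') = N(−b,σ²). -/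

import Mathlib

open MeasureTheory ProbabilityTheory
open scoped ENNReal NNReal

/-- Hockey-stick divergence: `H_α(P ‖ Q) = sup_{E measurable} (P(E) − α·Q(E))`. -/
noncomputable def hsDiv {X : Type*} [MeasurableSpace X] (α : ℝ) (P Q : Measure X) : ℝ :=
  ⨆ E : {E : Set X // MeasurableSet E}, ((P E).toReal - α * (Q E).toReal)

/-- The without-replacement subsampled Gaussian mechanism:
`M_{m,b}(x) = binom(m,b)⁻¹ ∑_{S ⊆ [m], |S| = b} N(∑_{i∈S} x_i, σ²)`. -/
noncomputable def worGauss (σ : ℝ) (b : ℕ) {m : ℕ} (x : Fin m → ℝ) : Measure ℝ :=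
  ((m.choose b : ℝ≥0∞))⁻¹ •
    ∑ S ∈ Finset.powersetCard b (Finset.univ : Finset (Fin m)),
      gaussianReal (∑ i ∈ S, x i) ⟨σ ^ 2, sq_nonneg σ⟩

open Real Finset

lemma gauss_prod (θ μ A s t : ℝ) (hs : 0 < s) (ht : 0 < t) (x y : ℝ) :
    gaussianPDFReal (θ*x+μ) ⟨t, ht.le⟩ y * gaussianPDFReal A ⟨s, hs.le⟩ x =
    gaussianPDFReal (θ*A+μ) ⟨θ^2*s+t, by positivity⟩ y *
      gaussianPDFReal (A + θ*s*(y-μ-θ*A)/(θ^2*s+t)) ⟨s*t/(θ^2*s+t), by positivity⟩ x := by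
  have hr : 0 < θ^2*s+t := by positivity
  simp only [gaussianPDFReal, NNReal.coe_mk, NNReal.toReal]
  have h1 : (√(2*π*t))⁻¹ * (√(2*π*s))⁻¹ = (√(2*π*(θ^2*s+t)))⁻¹ * (√(2*π*(s*t/(θ^2*s+t))))⁻¹ := by
    rw [← mul_inv, ← mul_inv, ← Real.sqrt_mul (by positivity), ← Real.sqrt_mul (by positivity)]
    congr 2
    field_simp
  calc (√(2*π*t))⁻¹ * rexp (-(y-(θ*x+μ))^2/(2*t)) * ((√(2*π*s))⁻¹ * rexp (-(x-A)^2/(2*s)))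
      = ((√(2*π*t))⁻¹ * (√(2*π*s))⁻¹) * rexp (-(y-(θ*x+μ))^2/(2*t) + -(x-A)^2/(2*s)) := by
        rw [Real.exp_add]; ring
    _ = ((√(2*π*(θ^2*s+t)))⁻¹ * (√(2*π*(s*t/(θ^2*s+t))))⁻¹) *
        rexp (-(y-(θ*A+μ))^2/(2*(θ^2*s+t)) + -(x-(A + θ*s*(y-μ-θ*A)/(θ^2*s+t)))^2/(2*(s*t/(θ^2*s+t)))) := by
        rw [h1]; congr 2
        field_simp
        ring
    _ = _ := by rw [Real.exp_add]; ring

lemma gpdf_uncurry_meas (θ μ : ℝ) (t : ℝ≥0) :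
    Measurable (fun p : ℝ × ℝ => gaussianPDF (θ*p.1+μ) t p.2) := by
  simp only [gaussianPDF, gaussianPDFReal]
  apply Measurable.ennreal_ofReal
  fun_prop

lemma lint_ofReal_pdf (c : ℝ) (w : ℝ≥0) (hw : w ≠ 0) :
    ∫⁻ a, ENNReal.ofReal (gaussianPDFReal c w a) = 1 :=
  lintegral_gaussianPDF_eq_one c hw

lemma gauss_ne_top (c : ℝ) (w : ℝ≥0) (E : Set ℝ) : gaussianReal c w E ≠ ⊤ :=
  measure_ne_top _ _

lemma kernel_step_lintegral (v : ℝ≥0) (hv : v ≠ 0) (θ μ A : ℝ) (t : ℝ≥0) (ht : t ≠ 0)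
    (hvt : θ^2*(v:ℝ) + (t:ℝ) = (v:ℝ)) {E : Set ℝ} (hE : MeasurableSet E) :
    ∫⁻ x, (gaussianReal (θ*x+μ) t) E * gaussianPDF A v x = gaussianReal (θ*A+μ) v E := by
  have hvpos : 0 < (v:ℝ) := lt_of_le_of_ne v.2 (by exact_mod_cast hv.symm)
  have htpos : 0 < (t:ℝ) := lt_of_le_of_ne t.2 (by exact_mod_cast ht.symm)
  have hrv : (⟨θ^2*(v:ℝ)+(t:ℝ), by positivity⟩ : ℝ≥0) = v := by ext; simpa using hvt
  have key : ∀ y : ℝ, ∫⁻ x, gaussianPDF (θ*x+μ) t y * gaussianPDF A v x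
      = gaussianPDF (θ*A+μ) v y := by
    intro y
    have hprod : ∀ x, gaussianPDF (θ*x+μ) t y * gaussianPDF A v x
        = ENNReal.ofReal (gaussianPDFReal (θ*A+μ) v y)
          * ENNReal.ofReal (gaussianPDFReal (A + θ*(v:ℝ)*(y-μ-θ*A)/(θ^2*(v:ℝ)+(t:ℝ)))
              (⟨(v:ℝ)*(t:ℝ)/(θ^2*(v:ℝ)+(t:ℝ)), by positivity⟩ : ℝ≥0) x) := by
      intro x
      rw [gaussianPDF, gaussianPDF, ← ENNReal.ofReal_mul (gaussianPDFReal_nonneg _ _ _),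
        ← ENNReal.ofReal_mul (gaussianPDFReal_nonneg _ _ _)]
      congr 1
      have h2 := gauss_prod θ μ A (v:ℝ) (t:ℝ) hvpos htpos x y
      rw [hrv] at h2
      exact h2
    simp_rw [hprod]
    rw [lintegral_const_mul' _ _ ENNReal.ofReal_ne_top]
    have hid : ∀ (c : ℝ) (w : ℝ≥0) (x : ℝ), ENNReal.ofReal (gaussianPDFReal c w x) = gaussianPDF c w x := fun _ _ _ => rfl
    simp_rw [hid]
    have hpos2 : 0 < (v:ℝ)*(t:ℝ)/(θ^2*(v:ℝ)+(t:ℝ)) := by positivity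
    have hne : (⟨(v:ℝ)*(t:ℝ)/(θ^2*(v:ℝ)+(t:ℝ)), hpos2.le⟩ : ℝ≥0) ≠ 0 := fun h =>
      hpos2.ne' (congrArg NNReal.toReal h)
    exact (congrArg (gaussianPDF (θ*A+μ) v y * ·) (lint_ofReal_pdf _ _ hne)).trans (mul_one _)
  calc ∫⁻ x, (gaussianReal (θ*x+μ) t) E * gaussianPDF A v x
      = ∫⁻ x, (∫⁻ y in E, gaussianPDF (θ*x+μ) t y) * gaussianPDF A v x := by
        congr 1; ext x; rw [gaussianReal_apply _ ht]
    _ = ∫⁻ x, ∫⁻ y in E, gaussianPDF (θ*x+μ) t y * gaussianPDF A v x := by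
        congr 1; ext x
        exact (lintegral_mul_const _ (measurable_gaussianPDF _ _)).symm
    _ = ∫⁻ y in E, ∫⁻ x, gaussianPDF (θ*x+μ) t y * gaussianPDF A v x := by
        refine lintegral_lintegral_swap ?_
        exact ((gpdf_uncurry_meas θ μ t).mul
          ((measurable_gaussianPDF A v).comp measurable_fst)).aemeasurable
    _ = ∫⁻ y in E, gaussianPDF (θ*A+μ) v y := by simp_rw [key]
    _ = gaussianReal (θ*A+μ) v E := (gaussianReal_apply _ hv E).symm

lemma meas_kernel_apply (θ μ : ℝ) (t : ℝ≥0) {E : Set ℝ} (hE : MeasurableSet E) :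
    Measurable fun x => (gaussianReal (θ*x+μ) t) E := by
  rcases eq_or_ne t 0 with rfl|ht
  · simp_rw [gaussianReal_zero_var, Measure.dirac_apply' _ hE]
    exact (measurable_one.indicator hE).comp (by fun_prop)
  · simp_rw [gaussianReal_apply _ ht]
    exact Measurable.lintegral_prod_right' (gpdf_uncurry_meas θ μ t)

lemma kernel_step (v : ℝ≥0) (hv : v ≠ 0) (θ μ A : ℝ) (t : ℝ≥0)
    (hvt : θ^2*(v:ℝ) + (t:ℝ) = (v:ℝ)) {E : Set ℝ} (hE : MeasurableSet E) :
    ∫ x, ((gaussianReal (θ*x+μ) t) E).toReal * gaussianPDFReal A v x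
      = ((gaussianReal (θ*A+μ) v) E).toReal := by
  have hvpos : 0 < (v:ℝ) := lt_of_le_of_ne v.2 (by exact_mod_cast hv.symm)
  rcases eq_or_ne t 0 with rfl|ht
  · -- dirac case
    have hθ2 : θ^2 * (v:ℝ) = (v:ℝ) := by simpa using hvt
    have hf : Measurable (fun x : ℝ => θ*x+μ) := by fun_prop
    have hmap : Measure.map (fun x => θ*x+μ) (gaussianReal A v) = gaussianReal (θ*A+μ) v := by
      have hcomp : (fun x : ℝ => θ*x+μ) = (fun x => x + μ) ∘ (fun x => θ*x) := rfl
      rw [hcomp, ← Measure.map_map (measurable_add_const μ) (measurable_const_mul θ),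
        gaussianReal_map_const_mul, gaussianReal_map_add_const]
      congr 1
      ext
      push_cast
      exact hθ2
    have hpre : MeasurableSet ((fun x : ℝ => θ*x+μ) ⁻¹' E) := hf hE
    have hL : ∀ x, ((gaussianReal (θ*x+μ) 0) E).toReal * gaussianPDFReal A v x
        = Set.indicator ((fun x : ℝ => θ*x+μ) ⁻¹' E) (gaussianPDFReal A v) x := by
      intro x
      rw [gaussianReal_zero_var, Measure.dirac_apply' _ hE]
      by_cases hx : θ*x+μ ∈ E
      · rw [Set.indicator_of_mem hx,
          Set.indicator_of_mem (show x ∈ (fun x : ℝ => θ*x+μ) ⁻¹' E from hx)]; simp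
      · rw [Set.indicator_of_notMem hx,
          Set.indicator_of_notMem (show x ∉ (fun x : ℝ => θ*x+μ) ⁻¹' E from hx)]; simp
    simp_rw [hL]
    rw [integral_indicator hpre, ← hmap, Measure.map_apply hf hE,
      gaussianReal_apply_eq_integral _ hv, ENNReal.toReal_ofReal]
    exact setIntegral_nonneg hpre fun x _ => gaussianPDFReal_nonneg _ _ _
  · have hmeas : Measurable fun x => ((gaussianReal (θ*x+μ) t) E).toReal * gaussianPDFReal A v x :=
      ((meas_kernel_apply θ μ t hE).ennreal_toReal).mul (measurable_gaussianPDFReal A v)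
    rw [integral_eq_lintegral_of_nonneg_ae
      (Filter.Eventually.of_forall fun x => mul_nonneg ENNReal.toReal_nonneg
        (gaussianPDFReal_nonneg _ _ _)) hmeas.aestronglyMeasurable]
    have hptwise : ∀ x, ENNReal.ofReal (((gaussianReal (θ*x+μ) t) E).toReal * gaussianPDFReal A v x)
        = (gaussianReal (θ*x+μ) t) E * gaussianPDF A v x := by
      intro x
      rw [ENNReal.ofReal_mul ENNReal.toReal_nonneg, ENNReal.ofReal_toReal (measure_ne_top _ _)]
      rfl
    simp_rw [hptwise]
    rw [kernel_step_lintegral v hv θ μ A t ht hvt hE]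

/-- The optimal rejection set for a pair of Gaussians. -/
def Epos (v : ℝ≥0) (c a d : ℝ) : Set ℝ :=
  {x | c * gaussianPDFReal d v x < gaussianPDFReal a v x}

lemma measurableSet_Epos (v : ℝ≥0) (c a d : ℝ) : MeasurableSet (Epos v c a d) :=
  measurableSet_lt ((measurable_gaussianPDFReal d v).const_mul c) (measurable_gaussianPDFReal a v)

lemma integrable_bdd_mul_pdf (v : ℝ≥0) (a : ℝ) {g : ℝ → ℝ} (hg : Measurable g)
    (hg0 : ∀ x, 0 ≤ g x) (hg1 : ∀ x, g x ≤ 1) :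
    Integrable (fun x => g x * gaussianPDFReal a v x) :=
  (integrable_gaussianPDFReal a v).bdd_mul hg.aestronglyMeasurable
    (c := 1) (Filter.Eventually.of_forall fun x => by rw [Real.norm_eq_abs, abs_of_nonneg (hg0 x)]; exact hg1 x)

lemma gauss_apply_toReal (v : ℝ≥0) (hv : v ≠ 0) (a : ℝ) {E : Set ℝ} (hE : MeasurableSet E) :
    ((gaussianReal a v) E).toReal = ∫ x in E, gaussianPDFReal a v x := by
  rw [gaussianReal_apply_eq_integral _ hv, ENNReal.toReal_ofReal]
  exact setIntegral_nonneg hE fun x _ => gaussianPDFReal_nonneg _ _ _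

lemma fun_le_hs (v : ℝ≥0) (hv : v ≠ 0) (c a d : ℝ) (hc : 0 ≤ c) {g : ℝ → ℝ}
    (hg : Measurable g) (hg0 : ∀ x, 0 ≤ g x) (hg1 : ∀ x, g x ≤ 1) :
    (∫ x, g x * gaussianPDFReal a v x) - c * (∫ x, g x * gaussianPDFReal d v x) ≤
      ((gaussianReal a v) (Epos v c a d)).toReal
        - c * ((gaussianReal d v) (Epos v c a d)).toReal := by
  set E := Epos v c a d with hEdef
  have hE : MeasurableSet E := measurableSet_Epos v c a d
  have Ia : Integrable (fun x => g x * gaussianPDFReal a v x) :=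
    integrable_bdd_mul_pdf v a hg hg0 hg1
  have Id : Integrable (fun x => g x * gaussianPDFReal d v x) :=
    integrable_bdd_mul_pdf v d hg hg0 hg1
  have Ih : Integrable (fun x => gaussianPDFReal a v x - c * gaussianPDFReal d v x) :=
    (integrable_gaussianPDFReal a v).sub ((integrable_gaussianPDFReal d v).const_mul c)
  have Iind : Integrable (E.indicator fun x => gaussianPDFReal a v x - c * gaussianPDFReal d v x) :=
    Ih.indicator hE
  have step1 : (∫ x, g x * gaussianPDFReal a v x) - c * (∫ x, g x * gaussianPDFReal d v x)
      = ∫ x, g x * (gaussianPDFReal a v x - c * gaussianPDFReal d v x) := by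
    have e1 : (fun x => g x * (gaussianPDFReal a v x - c * gaussianPDFReal d v x))
        = fun x => g x * gaussianPDFReal a v x - c * (g x * gaussianPDFReal d v x) := by
      ext x; ring
    rw [e1, integral_sub Ia (Id.const_mul c), integral_const_mul]
  have step2 : ∀ x, g x * (gaussianPDFReal a v x - c * gaussianPDFReal d v x) ≤
      E.indicator (fun x => gaussianPDFReal a v x - c * gaussianPDFReal d v x) x := by
    intro x
    by_cases hx : x ∈ E
    · rw [Set.indicator_of_mem hx]
      have hpos : 0 < gaussianPDFReal a v x - c * gaussianPDFReal d v x := by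
        have := hx; rw [hEdef] at this; simp only [Epos, Set.mem_setOf_eq] at this; linarith
      nlinarith [hg0 x, hg1 x]
    · rw [Set.indicator_of_notMem hx]
      have hneg : gaussianPDFReal a v x - c * gaussianPDFReal d v x ≤ 0 := by
        have := hx; rw [hEdef] at this; simp only [Epos, Set.mem_setOf_eq, not_lt] at this; linarith
      nlinarith [hg0 x, hg1 x]
  have step3 : ∫ x, g x * (gaussianPDFReal a v x - c * gaussianPDFReal d v x) ≤
      ∫ x, E.indicator (fun x => gaussianPDFReal a v x - c * gaussianPDFReal d v x) x := by
    refine integral_mono ?_ Iind step2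
    exact Ih.bdd_mul hg.aestronglyMeasurable
      (c := 1) (Filter.Eventually.of_forall fun x => by rw [Real.norm_eq_abs, abs_of_nonneg (hg0 x)]; exact hg1 x)
  have step4 : ∫ x, E.indicator (fun x => gaussianPDFReal a v x - c * gaussianPDFReal d v x) x
      = ((gaussianReal a v) E).toReal - c * ((gaussianReal d v) E).toReal := by
    rw [integral_indicator hE, integral_sub (integrable_gaussianPDFReal a v).integrableOn
        ((integrable_gaussianPDFReal d v).const_mul c).integrableOn, integral_const_mul,
      gauss_apply_toReal v hv a hE, gauss_apply_toReal v hv d hE]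
  calc _ = _ := step1
    _ ≤ _ := step3
    _ = _ := step4

lemma toReal_prob_le_one {μ : Measure ℝ} [IsProbabilityMeasure μ] (E : Set ℝ) :
    (μ E).toReal ≤ 1 := by
  have h := prob_le_one (μ := μ) (s := E)
  have := ENNReal.toReal_mono (by simp) h
  simpa using this

lemma pair_bound (v : ℝ≥0) (hv : v ≠ 0) (α β : ℝ) (hα : 1 ≤ α) (hβ : 0 ≤ β)
    (A₀ u p q : ℝ) (hup : |u - p| ≤ 2) (huq : |u - q| ≤ 2)
    {E : Set ℝ} (hE : MeasurableSet E) :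
    ((gaussianReal u v) E).toReal - α * ((gaussianReal p v) E).toReal
        - β * ((gaussianReal q v) E).toReal ≤
      ((gaussianReal (A₀+2) v) (Epos v (α+β) (A₀+2) A₀)).toReal
        - (α+β) * ((gaussianReal A₀ v) (Epos v (α+β) (A₀+2) A₀)).toReal := by
  have hαβ : 0 < α + β := by linarith
  set lam := α / (α+β) with hlam
  have hlam0 : 0 ≤ lam := by positivity
  have hlam1 : lam ≤ 1 := by rw [hlam, div_le_one hαβ]; linarith
  set θ₁ := (u - p)/2 with hθ₁
  set θ₂ := (u - q)/2 with hθ₂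
  have hsq : ∀ z w : ℝ, |z - w| ≤ 2 → ((z-w)/2)^2 ≤ 1 := by
    intro z w h
    have h4 : (z-w)^2 ≤ 4 := by nlinarith [sq_abs (z-w), abs_nonneg (z-w)]
    nlinarith
  have hθ₁sq : θ₁^2 ≤ 1 := hsq u p hup
  have hθ₂sq : θ₂^2 ≤ 1 := hsq u q huq
  set t₁ : ℝ≥0 := ⟨(1-θ₁^2)*(v:ℝ), mul_nonneg (by linarith) v.2⟩ with ht₁
  set t₂ : ℝ≥0 := ⟨(1-θ₂^2)*(v:ℝ), mul_nonneg (by linarith) v.2⟩ with ht₂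
  have hvt₁ : θ₁^2*(v:ℝ) + (t₁:ℝ) = (v:ℝ) := by rw [ht₁]; simp only [NNReal.toReal]; ring
  have hvt₂ : θ₂^2*(v:ℝ) + (t₂:ℝ) = (v:ℝ) := by rw [ht₂]; simp only [NNReal.toReal]; ring
  set μ₁ := p - θ₁*A₀ with hμ₁
  set μ₂ := q - θ₂*A₀ with hμ₂
  set K₁ := fun x => ((gaussianReal (θ₁*x+μ₁) t₁) E).toReal with hK₁
  set K₂ := fun x => ((gaussianReal (θ₂*x+μ₂) t₂) E).toReal with hK₂
  have hK₁m : Measurable K₁ := (meas_kernel_apply θ₁ μ₁ t₁ hE).ennreal_toReal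
  have hK₂m : Measurable K₂ := (meas_kernel_apply θ₂ μ₂ t₂ hE).ennreal_toReal
  have hK₁0 : ∀ x, 0 ≤ K₁ x := fun x => ENNReal.toReal_nonneg
  have hK₂0 : ∀ x, 0 ≤ K₂ x := fun x => ENNReal.toReal_nonneg
  have hK₁1 : ∀ x, K₁ x ≤ 1 := fun x => toReal_prob_le_one E
  have hK₂1 : ∀ x, K₂ x ≤ 1 := fun x => toReal_prob_le_one E
  set g := fun x => lam * K₁ x + (1-lam) * K₂ x with hgdef
  have hg : Measurable g := (hK₁m.const_mul lam).add (hK₂m.const_mul (1-lam))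
  have hg0 : ∀ x, 0 ≤ g x := fun x => by
    have := hK₁0 x; have := hK₂0 x
    have : 0 ≤ lam * K₁ x := mul_nonneg hlam0 (hK₁0 x)
    have : 0 ≤ (1-lam) * K₂ x := mul_nonneg (by linarith) (hK₂0 x)
    simp only [hgdef]; linarith
  have hg1 : ∀ x, g x ≤ 1 := fun x => by
    have h1 : lam * K₁ x ≤ lam * 1 := mul_le_mul_of_nonneg_left (hK₁1 x) hlam0
    have h2 : (1-lam) * K₂ x ≤ (1-lam) * 1 := mul_le_mul_of_nonneg_left (hK₂1 x) (by linarith)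
    simp only [hgdef]; linarith
  have hint : ∀ (A : ℝ), Integrable (fun x => g x * gaussianPDFReal A v x) := fun A =>
    integrable_bdd_mul_pdf v A hg hg0 hg1
  have expand : ∀ (A : ℝ), (∫ x, g x * gaussianPDFReal A v x)
      = lam * (∫ x, K₁ x * gaussianPDFReal A v x) + (1-lam) * (∫ x, K₂ x * gaussianPDFReal A v x) := by
    intro A
    have I₁ : Integrable (fun x => K₁ x * gaussianPDFReal A v x) :=
      integrable_bdd_mul_pdf v A hK₁m hK₁0 hK₁1
    have I₂ : Integrable (fun x => K₂ x * gaussianPDFReal A v x) :=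
      integrable_bdd_mul_pdf v A hK₂m hK₂0 hK₂1
    have e : (fun x => g x * gaussianPDFReal A v x)
        = fun x => lam * (K₁ x * gaussianPDFReal A v x) + (1-lam) * (K₂ x * gaussianPDFReal A v x) := by
      ext x; simp only [hgdef]; ring
    rw [e, integral_add (I₁.const_mul lam) (I₂.const_mul (1-lam)), integral_const_mul,
      integral_const_mul]
  have hm₁u : θ₁*(A₀+2)+μ₁ = u := by rw [hμ₁, hθ₁]; ring
  have hm₂u : θ₂*(A₀+2)+μ₂ = u := by rw [hμ₂, hθ₂]; ring
  have hm₁p : θ₁*A₀+μ₁ = p := by rw [hμ₁]; ring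
  have hm₂q : θ₂*A₀+μ₂ = q := by rw [hμ₂]; ring
  have hga : (∫ x, g x * gaussianPDFReal (A₀+2) v x) = ((gaussianReal u v) E).toReal := by
    rw [expand, hK₁, hK₂, kernel_step v hv θ₁ μ₁ (A₀+2) t₁ hvt₁ hE,
      kernel_step v hv θ₂ μ₂ (A₀+2) t₂ hvt₂ hE, hm₁u, hm₂u]
    ring
  have hgd : (∫ x, g x * gaussianPDFReal A₀ v x)
      = lam * ((gaussianReal p v) E).toReal + (1-lam) * ((gaussianReal q v) E).toReal := by
    rw [expand, hK₁, hK₂, kernel_step v hv θ₁ μ₁ A₀ t₁ hvt₁ hE,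
      kernel_step v hv θ₂ μ₂ A₀ t₂ hvt₂ hE, hm₁p, hm₂q]
  have key := fun_le_hs v hv (α+β) (A₀+2) A₀ hαβ.le hg hg0 hg1
  rw [hga, hgd] at key
  have hcoef : (α+β) * (lam * ((gaussianReal p v) E).toReal
      + (1-lam) * ((gaussianReal q v) E).toReal)
      = α * ((gaussianReal p v) E).toReal + β * ((gaussianReal q v) E).toReal := by
    rw [hlam]; field_simp
    ring
  linarith

lemma hsDiv_le {X : Type*} [MeasurableSpace X] {α B : ℝ} {P Q : Measure X}
    (h : ∀ E : Set X, MeasurableSet E → (P E).toReal - α * (Q E).toReal ≤ B) :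
    hsDiv α P Q ≤ B := by
  haveI : Nonempty {E : Set X // MeasurableSet E} := ⟨⟨∅, MeasurableSet.empty⟩⟩
  exact ciSup_le fun E => h E.1 E.2

lemma le_hsDiv {X : Type*} [MeasurableSpace X] {α : ℝ} (hα : 0 ≤ α) (P Q : Measure X)
    (hP : P Set.univ ≠ ⊤) {E : Set X} (hE : MeasurableSet E) :
    (P E).toReal - α * (Q E).toReal ≤ hsDiv α P Q := by
  have hbdd : BddAbove (Set.range fun F : {E : Set X // MeasurableSet E} =>
      (P F.1).toReal - α * (Q F.1).toReal) := by
    refine ⟨(P Set.univ).toReal, ?_⟩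
    rintro x ⟨F, rfl⟩
    have h1 : (P F.1).toReal ≤ (P Set.univ).toReal :=
      ENNReal.toReal_mono hP (measure_mono (Set.subset_univ _))
    have h2 : 0 ≤ α * (Q F.1).toReal := mul_nonneg hα ENNReal.toReal_nonneg
    simp only []
    linarith
  exact le_ciSup hbdd (⟨E, hE⟩ : {E : Set X // MeasurableSet E})

lemma double_count {n bb : ℕ} (i : Fin n) (G : Finset (Fin n) → ℝ) :
    ∑ S ∈ (powersetCard bb (univ : Finset (Fin n))).filter (fun S => i ∈ S),
      ∑ j ∈ univ \ S, G (insert j (S.erase i)) =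
    ∑ T ∈ (powersetCard bb (univ : Finset (Fin n))).filter (fun T => i ∉ T),
      ∑ j ∈ T, G T := by
  rw [Finset.sum_sigma', Finset.sum_sigma']
  refine Finset.sum_nbij' (fun p => ⟨insert p.2 (p.1.erase i), p.2⟩)
    (fun p => ⟨insert i (p.1.erase p.2), p.2⟩) ?_ ?_ ?_ ?_ ?_
  · rintro ⟨S, j⟩ hp
    simp only [mem_sigma, mem_filter, mem_powersetCard, mem_sdiff, mem_univ, true_and] at hp ⊢
    obtain ⟨⟨⟨-, hcard⟩, hiS⟩, hjS⟩ := hp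
    have hb1 : 1 ≤ bb := hcard ▸ Finset.card_pos.mpr ⟨i, hiS⟩
    have hji : j ∉ S.erase i := fun h => hjS (Finset.mem_of_mem_erase h)
    refine ⟨⟨⟨Finset.subset_univ _, ?_⟩, ?_⟩, Finset.mem_insert_self _ _⟩
    · rw [Finset.card_insert_of_notMem hji, Finset.card_erase_of_mem hiS, hcard]
      omega
    · intro hmem
      rcases Finset.mem_insert.mp hmem with h | h
      · exact hjS (h ▸ hiS)
      · exact Finset.notMem_erase i S h
  · rintro ⟨T, j⟩ hp
    simp only [mem_sigma, mem_filter, mem_powersetCard, mem_sdiff, mem_univ, true_and] at hp ⊢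
    obtain ⟨⟨⟨-, hcard⟩, hiT⟩, hjT⟩ := hp
    have hb1 : 1 ≤ bb := hcard ▸ Finset.card_pos.mpr ⟨j, hjT⟩
    have hij : i ∉ T.erase j := fun h => hiT (Finset.mem_of_mem_erase h)
    refine ⟨⟨⟨Finset.subset_univ _, ?_⟩, Finset.mem_insert_self _ _⟩, ?_⟩
    · rw [Finset.card_insert_of_notMem hij, Finset.card_erase_of_mem hjT, hcard]
      omega
    · intro hmem
      rcases Finset.mem_insert.mp hmem with h | h
      · exact hiT (h ▸ hjT)
      · exact Finset.notMem_erase j T h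
  · rintro ⟨S, j⟩ hp
    simp only [mem_sigma, mem_filter, mem_powersetCard, mem_sdiff, mem_univ, true_and] at hp
    obtain ⟨⟨-, hiS⟩, hjS⟩ := hp
    have hji : j ∉ S.erase i := fun h => hjS (Finset.mem_of_mem_erase h)
    simp only [Finset.erase_insert hji, Finset.insert_erase hiS]
  · rintro ⟨T, j⟩ hp
    simp only [mem_sigma, mem_filter, mem_powersetCard, mem_sdiff, mem_univ, true_and] at hp
    obtain ⟨⟨-, hiT⟩, hjT⟩ := hp
    have hij : i ∉ T.erase j := fun h => hiT (Finset.mem_of_mem_erase h)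
    simp only [Finset.erase_insert hij, Finset.insert_erase hjT]
  · rintro ⟨S, j⟩ _
    rfl

lemma filter_not_mem_powersetCard {n bb : ℕ} (i : Fin n) :
    (powersetCard bb (univ : Finset (Fin n))).filter (fun S => i ∉ S)
      = powersetCard bb ((univ : Finset (Fin n)).erase i) := by
  ext S
  simp only [mem_filter, mem_powersetCard, Finset.subset_erase]
  tauto

lemma card_filter_not_mem {m bb : ℕ} (i : Fin (m+1)) :
    ((powersetCard bb (univ : Finset (Fin (m+1)))).filter (fun S => i ∉ S)).card
      = m.choose bb := by
  rw [filter_not_mem_powersetCard, Finset.card_powersetCard, Finset.card_erase_of_mem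
    (mem_univ i), card_univ, Fintype.card_fin]
  norm_num

lemma card_filter_mem {m bb : ℕ} (hb1 : 1 ≤ bb) (hbn : bb ≤ m + 1) (i : Fin (m+1)) :
    ((powersetCard bb (univ : Finset (Fin (m+1)))).filter (fun S => i ∈ S)).card
      = m.choose (bb - 1) := by
  have htot := Finset.card_filter_add_card_filter_not
    (s := powersetCard bb (univ : Finset (Fin (m+1)))) (p := fun S => i ∈ S)
  rw [Finset.card_powersetCard, card_univ, Fintype.card_fin] at htot
  have hnot := card_filter_not_mem (m := m) (bb := bb) i
  have hpascal : (m+1).choose bb = m.choose (bb - 1) + m.choose bb := by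
    obtain ⟨c, rfl⟩ := Nat.exists_eq_add_of_le hb1
    simpa [Nat.add_comm] using Nat.choose_succ_succ m c
  omega

lemma nat_id1 {m b : ℕ} (hb1 : 1 ≤ b) : (m+1) * m.choose (b-1) = (m+1).choose b * b := by
  have h := Nat.add_one_mul_choose_eq m (b-1)
  rwa [Nat.sub_add_cancel hb1] at h

lemma nat_id2 {m b : ℕ} : (m+1) * m.choose b = (m+1).choose b * (m+1-b) := by
  rcases le_or_gt b m with hbm | hbm
  · have h1 := Nat.choose_succ_right_eq (m+1) b
    have h2 := Nat.add_one_mul_choose_eq m b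
    calc (m+1) * m.choose b = (m+1).choose (b+1) * (b+1) := h2
      _ = (m+1).choose b * (m+1-b) := h1
  · rcases Nat.lt_or_ge b (m+2) with hb2 | hb2
    · have hb : b = m+1 := by omega
      subst hb
      simp [Nat.choose_succ_self]
    · have h1 : m.choose b = 0 := Nat.choose_eq_zero_of_lt (by omega)
      have h2 : (m+1).choose b = 0 := Nat.choose_eq_zero_of_lt (by omega)
      simp [h1, h2]

lemma scalar_gamma {m b : ℕ} (hb1 : 1 ≤ b) (hbn : b ≤ m+1) {γ : ℝ} (hγ : γ = (b:ℝ)/(m+1)) :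
    (((m+1).choose b : ℝ≥0∞))⁻¹ * (m.choose (b-1) : ℕ) = ENNReal.ofReal γ := by
  have hC0 : ((m+1).choose b : ℝ≥0∞) ≠ 0 := by
    exact_mod_cast Nat.cast_ne_zero.mpr (Nat.choose_pos hbn).ne'
  have hCt : ((m+1).choose b : ℝ≥0∞) ≠ ⊤ := ENNReal.natCast_ne_top _
  have h1 : ENNReal.ofReal γ = (b : ℝ≥0∞) / ((m+1 : ℕ) : ℝ≥0∞) := by
    rw [hγ, show ((m:ℝ)+1) = ((m+1:ℕ):ℝ) by push_cast; ring,
      ENNReal.ofReal_div_of_pos (by positivity), ENNReal.ofReal_natCast,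
      ENNReal.ofReal_natCast]
  rw [h1, ← ENNReal.div_eq_inv_mul, ENNReal.div_eq_div_iff
    (Nat.cast_ne_zero.mpr (Nat.succ_ne_zero m)) (ENNReal.natCast_ne_top _)
    hC0 hCt]
  rw [← Nat.cast_mul, ← Nat.cast_mul]
  exact_mod_cast nat_id1 hb1

lemma scalar_gamma' {m b : ℕ} (hb1 : 1 ≤ b) (hbn : b ≤ m+1) {γ : ℝ} (hγ : γ = (b:ℝ)/(m+1)) :
    (((m+1).choose b : ℝ≥0∞))⁻¹ * (m.choose b : ℕ) = ENNReal.ofReal (1-γ) := by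
  have hC0 : ((m+1).choose b : ℝ≥0∞) ≠ 0 := by
    exact_mod_cast Nat.cast_ne_zero.mpr (Nat.choose_pos hbn).ne'
  have hCt : ((m+1).choose b : ℝ≥0∞) ≠ ⊤ := ENNReal.natCast_ne_top _
  have h1 : ENNReal.ofReal (1-γ) = ((m+1-b : ℕ) : ℝ≥0∞) / ((m+1 : ℕ) : ℝ≥0∞) := by
    have : (1:ℝ) - γ = ((m+1-b : ℕ):ℝ)/((m+1:ℕ):ℝ) := by
      rw [hγ, Nat.cast_sub hbn]
      push_cast
      field_simp
    rw [this, ENNReal.ofReal_div_of_pos (by positivity), ENNReal.ofReal_natCast,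
      ENNReal.ofReal_natCast]
  rw [h1, ← ENNReal.div_eq_inv_mul, ENNReal.div_eq_div_iff
    (Nat.cast_ne_zero.mpr (Nat.succ_ne_zero m)) (ENNReal.natCast_ne_top _)
    hC0 hCt]
  rw [← Nat.cast_mul, ← Nat.cast_mul]
  exact_mod_cast nat_id2 (m := m) (b := b)

lemma worGauss_const (σ : ℝ) (m b : ℕ) (hbn : b ≤ m + 1) :
    worGauss σ b (fun _ : Fin (m + 1) => (-1 : ℝ)) =
      gaussianReal (-(b : ℝ)) ⟨σ ^ 2, sq_nonneg σ⟩ := by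
  unfold worGauss
  have hsum : ∀ S ∈ powersetCard b (univ : Finset (Fin (m+1))),
      gaussianReal (∑ _i ∈ S, (-1:ℝ)) ⟨σ ^ 2, sq_nonneg σ⟩
        = gaussianReal (-(b : ℝ)) ⟨σ ^ 2, sq_nonneg σ⟩ := by
    intro S hS
    rw [Finset.sum_const, (Finset.mem_powersetCard.mp hS).2]
    norm_num
  rw [Finset.sum_congr rfl hsum, Finset.sum_const, Finset.card_powersetCard, card_univ,
    Fintype.card_fin, ← Nat.cast_smul_eq_nsmul ℝ≥0∞, smul_smul,
    ENNReal.inv_mul_cancel (by exact_mod_cast (Nat.choose_pos hbn).ne') (ENNReal.natCast_ne_top _),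
    one_smul]

lemma snoc_ne_last {m : ℕ} {k : Fin (m+1)} (hk : k ≠ Fin.last m) :
    (Fin.snoc (fun _ : Fin m => (-1 : ℝ)) 1 : Fin (m+1) → ℝ) k = -1 := by
  obtain ⟨j, rfl⟩ := Fin.exists_castSucc_eq.mpr hk
  simp

lemma sum_snoc_mem {m b : ℕ} (hb1 : 1 ≤ b) {S : Finset (Fin (m+1))}
    (hS : S ∈ powersetCard b (univ : Finset (Fin (m+1)))) (hlast : Fin.last m ∈ S) :
    ∑ k ∈ S, (Fin.snoc (fun _ : Fin m => (-1 : ℝ)) 1 : Fin (m+1) → ℝ) k = 2 - (b:ℝ) := by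
  have hcard := (Finset.mem_powersetCard.mp hS).2
  rw [← Finset.add_sum_erase S _ hlast]
  have h1 : ∀ k ∈ S.erase (Fin.last m),
      (Fin.snoc (fun _ : Fin m => (-1 : ℝ)) 1 : Fin (m+1) → ℝ) k = -1 := fun k hk =>
    snoc_ne_last (Finset.ne_of_mem_erase hk)
  rw [Finset.sum_congr rfl h1, Finset.sum_const, Finset.card_erase_of_mem hlast, hcard]
  rw [Fin.snoc_last]
  have : ((b-1 : ℕ) : ℝ) = (b:ℝ) - 1 := by
    rw [Nat.cast_sub hb1]; norm_num
  rw [nsmul_eq_mul, this]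
  ring

lemma sum_snoc_not_mem {m b : ℕ} {S : Finset (Fin (m+1))}
    (hS : S ∈ powersetCard b (univ : Finset (Fin (m+1)))) (hlast : Fin.last m ∉ S) :
    ∑ k ∈ S, (Fin.snoc (fun _ : Fin m => (-1 : ℝ)) 1 : Fin (m+1) → ℝ) k = -(b:ℝ) := by
  have hcard := (Finset.mem_powersetCard.mp hS).2
  have h1 : ∀ k ∈ S, (Fin.snoc (fun _ : Fin m => (-1 : ℝ)) 1 : Fin (m+1) → ℝ) k = -1 :=
    fun k hk => snoc_ne_last (by rintro rfl; exact hlast hk)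
  rw [Finset.sum_congr rfl h1, Finset.sum_const, hcard]
  norm_num


lemma worGauss_snoc (σ : ℝ) (m b : ℕ) (hb1 : 1 ≤ b) (hbn : b ≤ m + 1) (γ : ℝ)
    (hγ : γ = (b : ℝ) / (m + 1)) :
    worGauss σ b (Fin.snoc (fun _ : Fin m => (-1 : ℝ)) 1) =
      ENNReal.ofReal (1 - γ) • gaussianReal (-(b : ℝ)) ⟨σ ^ 2, sq_nonneg σ⟩ +
        ENNReal.ofReal γ • gaussianReal (2 - (b : ℝ)) ⟨σ ^ 2, sq_nonneg σ⟩ := by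
  unfold worGauss
  rw [← Finset.sum_filter_add_sum_filter_not (powersetCard b (univ : Finset (Fin (m+1))))
    (fun S => Fin.last m ∈ S)]
  have hin : ∀ S ∈ (powersetCard b (univ : Finset (Fin (m+1)))).filter
      (fun S => Fin.last m ∈ S),
      gaussianReal (∑ k ∈ S, (Fin.snoc (fun _ : Fin m => (-1 : ℝ)) 1 : Fin (m+1) → ℝ) k)
          ⟨σ ^ 2, sq_nonneg σ⟩
        = gaussianReal (2 - (b:ℝ)) ⟨σ ^ 2, sq_nonneg σ⟩ := by
    intro S hS
    obtain ⟨hS1, hS2⟩ := Finset.mem_filter.mp hS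
    rw [sum_snoc_mem hb1 hS1 hS2]
  have hout : ∀ S ∈ (powersetCard b (univ : Finset (Fin (m+1)))).filter
      (fun S => ¬ Fin.last m ∈ S),
      gaussianReal (∑ k ∈ S, (Fin.snoc (fun _ : Fin m => (-1 : ℝ)) 1 : Fin (m+1) → ℝ) k)
          ⟨σ ^ 2, sq_nonneg σ⟩
        = gaussianReal (-(b:ℝ)) ⟨σ ^ 2, sq_nonneg σ⟩ := by
    intro S hS
    obtain ⟨hS1, hS2⟩ := Finset.mem_filter.mp hS
    rw [sum_snoc_not_mem hS1 hS2]
  rw [Finset.sum_congr rfl hin, Finset.sum_congr rfl hout, Finset.sum_const, Finset.sum_const,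
    card_filter_mem hb1 hbn (Fin.last m), card_filter_not_mem (Fin.last m),
    ← Nat.cast_smul_eq_nsmul ℝ≥0∞, ← Nat.cast_smul_eq_nsmul ℝ≥0∞, smul_add,
    smul_smul, smul_smul, scalar_gamma hb1 hbn hγ, scalar_gamma' hb1 hbn hγ, add_comm]

lemma worGauss_apply_toReal (σ : ℝ) (b m : ℕ) (x : Fin m → ℝ) (E : Set ℝ) :
    ((worGauss σ b x) E).toReal
      = ((m.choose b : ℝ))⁻¹ * ∑ S ∈ powersetCard b (univ : Finset (Fin m)),
          ((gaussianReal (∑ i ∈ S, x i) ⟨σ ^ 2, sq_nonneg σ⟩) E).toReal := by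
  unfold worGauss
  rw [Measure.smul_apply, Measure.finset_sum_apply, smul_eq_mul, ENNReal.toReal_mul,
    ENNReal.toReal_inv, ENNReal.toReal_sum]
  · rfl
  · exact fun S _ => gauss_ne_top _ _ _

lemma mix_apply_toReal (σ : ℝ) {γ : ℝ} (hγ0 : 0 ≤ γ) (hγ1 : γ ≤ 1) (c d : ℝ) (E : Set ℝ) :
    (((ENNReal.ofReal (1-γ) • gaussianReal c ⟨σ^2, sq_nonneg σ⟩
        + ENNReal.ofReal γ • gaussianReal d ⟨σ^2, sq_nonneg σ⟩)) E).toReal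
      = (1-γ) * ((gaussianReal c ⟨σ^2, sq_nonneg σ⟩) E).toReal
        + γ * ((gaussianReal d ⟨σ^2, sq_nonneg σ⟩) E).toReal := by
  rw [Measure.add_apply, Measure.smul_apply, Measure.smul_apply, smul_eq_mul, smul_eq_mul,
    ENNReal.toReal_add (ENNReal.mul_ne_top ENNReal.ofReal_ne_top ?_)
      (ENNReal.mul_ne_top ENNReal.ofReal_ne_top ?_),
    ENNReal.toReal_mul, ENNReal.toReal_mul, ENNReal.toReal_ofReal (by linarith),
    ENNReal.toReal_ofReal hγ0]
  all_goals exact gauss_ne_top _ _ _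

lemma mix_univ_ne_top (σ : ℝ) (γ : ℝ) (c d : ℝ) :
    ((ENNReal.ofReal (1-γ) • gaussianReal c ⟨σ^2, sq_nonneg σ⟩
        + ENNReal.ofReal γ • gaussianReal d ⟨σ^2, sq_nonneg σ⟩)) Set.univ ≠ ⊤ := by
  rw [Measure.add_apply, Measure.smul_apply, Measure.smul_apply, smul_eq_mul, smul_eq_mul]
  exact ENNReal.add_ne_top.mpr
    ⟨ENNReal.mul_ne_top ENNReal.ofReal_ne_top (gauss_ne_top _ _ _),
     ENNReal.mul_ne_top ENNReal.ofReal_ne_top (gauss_ne_top _ _ _)⟩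

theorem main_ineq (σ : ℝ) (hσ : 0 < σ) (m b : ℕ) (hb1 : 1 ≤ b)
    (hbn : b ≤ m + 1) (γ : ℝ) (hγ : γ = (b : ℝ) / (m + 1)) :
    ∀ D D' : Fin (m + 1) → ℝ,
      (∀ j, D j ∈ Set.Icc (-1 : ℝ) 1) → (∀ j, D' j ∈ Set.Icc (-1 : ℝ) 1) →
      (∃ i : Fin (m + 1), D i ≠ D' i ∧ ∀ j : Fin (m + 1), j ≠ i → D j = D' j) →
      ∀ α : ℝ, 1 ≤ α →
        hsDiv α (worGauss σ b D) (worGauss σ b D') ≤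
          hsDiv α
            (ENNReal.ofReal (1 - γ) • gaussianReal (-(b : ℝ)) ⟨σ ^ 2, sq_nonneg σ⟩ +
              ENNReal.ofReal γ • gaussianReal (2 - (b : ℝ)) ⟨σ ^ 2, sq_nonneg σ⟩)
            (gaussianReal (-(b : ℝ)) ⟨σ ^ 2, sq_nonneg σ⟩) := by
  intro D D' hD hD' hdiff α hα
  obtain ⟨i, hne, hoff⟩ := hdiff
  have hV : (⟨σ^2, sq_nonneg σ⟩ : ℝ≥0) ≠ 0 := by
    intro h
    exact (pow_pos hσ 2).ne' (congrArg NNReal.toReal h)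
  have hm1 : (0:ℝ) < (m:ℝ) + 1 := by positivity
  have hγ0 : 0 ≤ γ := by rw [hγ]; positivity
  have hγ1 : γ ≤ 1 := by
    rw [hγ, div_le_one hm1]
    exact_mod_cast hbn
  have habs : ∀ x y : ℝ, x ∈ Set.Icc (-1:ℝ) 1 → y ∈ Set.Icc (-1:ℝ) 1 → |x - y| ≤ 2 := by
    intro x y hx hy
    obtain ⟨h1, h2⟩ := hx
    obtain ⟨h3, h4⟩ := hy
    rw [abs_le]
    constructor <;> linarith
  have hαβsum : ∀ S : Finset (Fin (m+1)), i ∈ S →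
      (∑ k ∈ S, D k) - (∑ k ∈ S, D' k) = D i - D' i := by
    intro S hiS
    rw [← Finset.sum_sub_distrib]
    exact Finset.sum_eq_single_of_mem i hiS (fun k _ hk => by rw [hoff k hk]; ring)
  have he2 : -(b:ℝ)+2 = 2-(b:ℝ) := by ring
  apply hsDiv_le
  intro E hE
  set F : ℝ → ℝ := fun c => ((gaussianReal c (⟨σ^2, sq_nonneg σ⟩ : ℝ≥0)) E).toReal with hFdef
  rw [worGauss_apply_toReal, worGauss_apply_toReal]
  rcases eq_or_lt_of_le hbn with hbm1 | hbm
  · -- b = m + 1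
    have hγval : γ = 1 := by rw [hγ, hbm1]; push_cast; field_simp
    have hps : powersetCard b (univ : Finset (Fin (m+1))) = {univ} := by
      have hsetb : b = (univ : Finset (Fin (m+1))).card := by
        rw [card_univ, Fintype.card_fin, hbm1]
      rw [hsetb]
      exact Finset.powersetCard_self _
    have hch : (m+1).choose b = 1 := by rw [hbm1]; exact Nat.choose_self _
    rw [hps, hch, Finset.sum_singleton, Finset.sum_singleton]
    simp only [Nat.cast_one, inv_one, one_mul]
    set u := ∑ k ∈ (univ : Finset (Fin (m+1))), D k with hu
    set p := ∑ k ∈ (univ : Finset (Fin (m+1))), D' k with hp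
    have hup : |u - p| ≤ 2 := by
      rw [hu, hp, hαβsum univ (mem_univ i)]
      exact habs _ _ (hD i) (hD' i)
    have key := pair_bound _ hV α 0 hα le_rfl (-(b:ℝ)) u p p hup hup hE
    rw [he2] at key
    simp only [add_zero, zero_mul, sub_zero] at key
    have hle := le_hsDiv (by linarith : (0:ℝ) ≤ α)
      (ENNReal.ofReal (1 - γ) • gaussianReal (-(b : ℝ)) ⟨σ ^ 2, sq_nonneg σ⟩ +
        ENNReal.ofReal γ • gaussianReal (2 - (b : ℝ)) ⟨σ ^ 2, sq_nonneg σ⟩)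
      (gaussianReal (-(b : ℝ)) ⟨σ ^ 2, sq_nonneg σ⟩)
      (mix_univ_ne_top σ γ (-(b:ℝ)) (2-(b:ℝ)))
      (measurableSet_Epos (⟨σ^2, sq_nonneg σ⟩ : ℝ≥0) α (2-(b:ℝ)) (-(b:ℝ)))
    rw [mix_apply_toReal σ hγ0 hγ1] at hle
    have heq : (1-γ) * ((gaussianReal (-(b:ℝ)) (⟨σ^2, sq_nonneg σ⟩:ℝ≥0))
          (Epos (⟨σ^2, sq_nonneg σ⟩:ℝ≥0) α (2-(b:ℝ)) (-(b:ℝ)))).toReal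
        + γ * ((gaussianReal (2-(b:ℝ)) (⟨σ^2, sq_nonneg σ⟩:ℝ≥0))
          (Epos (⟨σ^2, sq_nonneg σ⟩:ℝ≥0) α (2-(b:ℝ)) (-(b:ℝ)))).toReal
        = ((gaussianReal (2-(b:ℝ)) (⟨σ^2, sq_nonneg σ⟩:ℝ≥0))
          (Epos (⟨σ^2, sq_nonneg σ⟩:ℝ≥0) α (2-(b:ℝ)) (-(b:ℝ)))).toReal := by
      rw [hγval]; ring
    linarith [key, hle, heq]
  · -- b ≤ m
    have hbm' : b ≤ m := by omega
    set K : ℕ := m + 1 - b with hK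
    have hK1 : 1 ≤ K := by omega
    have hKr : (K:ℝ) = (m:ℝ) + 1 - (b:ℝ) := by
      rw [hK, Nat.cast_sub hbn]; push_cast; ring
    have hKpos : (0:ℝ) < K := by exact_mod_cast hK1
    have hbpos : (0:ℝ) < b := by exact_mod_cast hb1
    set β := (α - 1) * (K:ℝ) / b with hβ
    have hβ0 : 0 ≤ β := by
      rw [hβ]
      have : 0 ≤ α - 1 := by linarith
      positivity
    set Pin := (powersetCard b (univ : Finset (Fin (m+1)))).filter (fun S => i ∈ S) with hPin
    set Pout := (powersetCard b (univ : Finset (Fin (m+1)))).filter (fun S => ¬ i ∈ S) with hPout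
    set Ep := Epos (⟨σ^2, sq_nonneg σ⟩ : ℝ≥0) (α+β) (-(b:ℝ)+2) (-(b:ℝ)) with hEp
    set B := ((gaussianReal (-(b:ℝ)+2) (⟨σ^2, sq_nonneg σ⟩ : ℝ≥0)) Ep).toReal
      - (α+β) * ((gaussianReal (-(b:ℝ)) (⟨σ^2, sq_nonneg σ⟩ : ℝ≥0)) Ep).toReal with hB
    have hpair : ∀ S ∈ Pin, ∀ j ∈ univ \ S,
        F (∑ k ∈ S, D k) - α * F (∑ k ∈ S, D' k)
          - β * F (∑ k ∈ insert j (S.erase i), D k) ≤ B := by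
      intro S hS j hj
      have hiS : i ∈ S := (Finset.mem_filter.mp hS).2
      have hjS : j ∉ S := (Finset.mem_sdiff.mp hj).2
      have hji : j ∉ S.erase i := fun h => hjS (Finset.mem_of_mem_erase h)
      have hup : |(∑ k ∈ S, D k) - (∑ k ∈ S, D' k)| ≤ 2 := by
        rw [hαβsum S hiS]; exact habs _ _ (hD i) (hD' i)
      have hwsum : (∑ k ∈ S, D k) - (∑ k ∈ insert j (S.erase i), D k) = D i - D j := by
        rw [Finset.sum_insert hji, ← Finset.add_sum_erase S D hiS]; ring
      have huw : |(∑ k ∈ S, D k) - (∑ k ∈ insert j (S.erase i), D k)| ≤ 2 := by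
        rw [hwsum]; exact habs _ _ (hD i) (hD j)
      exact pair_bound _ hV α β hα hβ0 (-(b:ℝ)) _ _ _ hup huw hE
    have hcardsdiff : ∀ S ∈ Pin, (univ \ S).card = K := by
      intro S hS
      have hcard := (Finset.mem_powersetCard.mp (Finset.mem_filter.mp hS).1).2
      rw [Finset.card_sdiff_of_subset (Finset.subset_univ S), card_univ, Fintype.card_fin, hcard]
    -- summed bound
    have hsum1 : ∑ S ∈ Pin, ∑ j ∈ univ \ S,
        (F (∑ k ∈ S, D k) - α * F (∑ k ∈ S, D' k)
          - β * F (∑ k ∈ insert j (S.erase i), D k))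
        ≤ (Pin.card : ℝ) * ((K:ℝ) * B) := by
      calc ∑ S ∈ Pin, ∑ j ∈ univ \ S, (F (∑ k ∈ S, D k) - α * F (∑ k ∈ S, D' k)
              - β * F (∑ k ∈ insert j (S.erase i), D k))
          ≤ ∑ S ∈ Pin, ∑ _j ∈ univ \ S, B :=
            Finset.sum_le_sum fun S hS => Finset.sum_le_sum fun j hj => hpair S hS j hj
        _ = ∑ S ∈ Pin, (K:ℝ) * B := by
            refine Finset.sum_congr rfl fun S hS => ?_
            rw [Finset.sum_const, hcardsdiff S hS, nsmul_eq_mul]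
        _ = (Pin.card : ℝ) * ((K:ℝ) * B) := by
            rw [Finset.sum_const, nsmul_eq_mul]
    -- expand LHS of hsum1
    have hexp : ∑ S ∈ Pin, ∑ j ∈ univ \ S,
        (F (∑ k ∈ S, D k) - α * F (∑ k ∈ S, D' k)
          - β * F (∑ k ∈ insert j (S.erase i), D k))
        = (K:ℝ) * (∑ S ∈ Pin, (F (∑ k ∈ S, D k) - α * F (∑ k ∈ S, D' k)))
          - β * ((b:ℝ) * ∑ T ∈ Pout, F (∑ k ∈ T, D k)) := by
      have e1 : ∀ S ∈ Pin, ∑ j ∈ univ \ S,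
          (F (∑ k ∈ S, D k) - α * F (∑ k ∈ S, D' k)
            - β * F (∑ k ∈ insert j (S.erase i), D k))
          = (K:ℝ) * (F (∑ k ∈ S, D k) - α * F (∑ k ∈ S, D' k))
            - β * ∑ j ∈ univ \ S, F (∑ k ∈ insert j (S.erase i), D k) := by
        intro S hS
        rw [Finset.sum_sub_distrib, Finset.sum_const, hcardsdiff S hS, nsmul_eq_mul,
          ← Finset.mul_sum]
      rw [Finset.sum_congr rfl e1, Finset.sum_sub_distrib, ← Finset.mul_sum, ← Finset.mul_sum]
      congr 2
      have hdc := double_count (bb := b) i (fun T => F (∑ k ∈ T, D k))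
      rw [hdc]
      have e3 : ∀ T ∈ Pout, ∑ _j ∈ T, F (∑ k ∈ T, D k) = (b:ℝ) * F (∑ k ∈ T, D k) := by
        intro T hT
        have hcard := (Finset.mem_powersetCard.mp (Finset.mem_filter.mp hT).1).2
        rw [Finset.sum_const, hcard, nsmul_eq_mul]
      rw [Finset.sum_congr rfl e3, ← Finset.mul_sum]
    have hβb : β * (b:ℝ) = (α - 1) * (K:ℝ) := by
      rw [hβ]; field_simp
    -- divide by K
    have final1 : (∑ S ∈ Pin, (F (∑ k ∈ S, D k) - α * F (∑ k ∈ S, D' k)))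
        - (α - 1) * ∑ T ∈ Pout, F (∑ k ∈ T, D k) ≤ (Pin.card : ℝ) * B := by
      rw [hexp] at hsum1
      have h2 : β * ((b:ℝ) * ∑ T ∈ Pout, F (∑ k ∈ T, D k))
          = (K:ℝ) * ((α - 1) * ∑ T ∈ Pout, F (∑ k ∈ T, D k)) := by
        rw [← mul_assoc, hβb]; ring
      rw [h2] at hsum1
      have h3 : (K:ℝ) * ((∑ S ∈ Pin, (F (∑ k ∈ S, D k) - α * F (∑ k ∈ S, D' k)))
          - (α - 1) * ∑ T ∈ Pout, F (∑ k ∈ T, D k)) ≤ (K:ℝ) * ((Pin.card : ℝ) * B) := by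
        calc _ = (K:ℝ) * (∑ S ∈ Pin, (F (∑ k ∈ S, D k) - α * F (∑ k ∈ S, D' k)))
              - (K:ℝ) * ((α - 1) * ∑ T ∈ Pout, F (∑ k ∈ T, D k)) := by ring
          _ ≤ (Pin.card : ℝ) * ((K:ℝ) * B) := hsum1
          _ = (K:ℝ) * ((Pin.card : ℝ) * B) := by ring
      exact le_of_mul_le_mul_left h3 hKpos
    -- relate to full sums
    have hsplit : ∀ G : Finset (Fin (m+1)) → ℝ,
        ∑ S ∈ powersetCard b (univ : Finset (Fin (m+1))), G S
          = ∑ S ∈ Pin, G S + ∑ S ∈ Pout, G S := fun G =>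
      (Finset.sum_filter_add_sum_filter_not _ _ G).symm
    have hout_eq : ∑ S ∈ Pout, F (∑ k ∈ S, D' k) = ∑ S ∈ Pout, F (∑ k ∈ S, D k) := by
      refine Finset.sum_congr rfl fun S hS => ?_
      have hiS : i ∉ S := (Finset.mem_filter.mp hS).2
      congr 1
      exact Finset.sum_congr rfl fun k hk => (hoff k (fun h => hiS (h ▸ hk))).symm
    have hsub : ∑ S ∈ Pin, (F (∑ k ∈ S, D k) - α * F (∑ k ∈ S, D' k))
        = ∑ S ∈ Pin, F (∑ k ∈ S, D k) - α * ∑ S ∈ Pin, F (∑ k ∈ S, D' k) := by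
      rw [Finset.sum_sub_distrib, ← Finset.mul_sum]
    -- the main quantity
    have hCpos : (0:ℝ) < ((m+1).choose b : ℝ) := by exact_mod_cast Nat.choose_pos hbn
    have hgam : (((m+1).choose b : ℝ))⁻¹ * (Pin.card : ℝ) = γ := by
      rw [hPin, card_filter_mem hb1 hbn i, hγ]
      have hnat : ((m:ℝ)+1) * (m.choose (b-1) : ℝ) = ((m+1).choose b : ℝ) * (b:ℝ) := by
        exact_mod_cast nat_id1 hb1
      field_simp
      linarith
    have hraw : (((m+1).choose b : ℝ))⁻¹ * (∑ S ∈ powersetCard b (univ : Finset (Fin (m+1))),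
          F (∑ k ∈ S, D k))
        - α * ((((m+1).choose b : ℝ))⁻¹ * ∑ S ∈ powersetCard b (univ : Finset (Fin (m+1))),
          F (∑ k ∈ S, D' k)) ≤ γ * B := by
      rw [hsplit (fun S => F (∑ k ∈ S, D k)), hsplit (fun S => F (∑ k ∈ S, D' k)), hout_eq]
      have hRaw2 : ∑ S ∈ Pin, F (∑ k ∈ S, D k) + ∑ S ∈ Pout, F (∑ k ∈ S, D k)
          - α * (∑ S ∈ Pin, F (∑ k ∈ S, D' k) + ∑ S ∈ Pout, F (∑ k ∈ S, D k))
          ≤ (Pin.card : ℝ) * B := by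
        have := final1
        rw [hsub] at this
        linarith
      calc (((m+1).choose b : ℝ))⁻¹ * (∑ S ∈ Pin, F (∑ k ∈ S, D k) + ∑ S ∈ Pout, F (∑ k ∈ S, D k))
            - α * ((((m+1).choose b : ℝ))⁻¹ * (∑ S ∈ Pin, F (∑ k ∈ S, D' k)
              + ∑ S ∈ Pout, F (∑ k ∈ S, D k)))
          = (((m+1).choose b : ℝ))⁻¹ * ((∑ S ∈ Pin, F (∑ k ∈ S, D k)
              + ∑ S ∈ Pout, F (∑ k ∈ S, D k))
            - α * (∑ S ∈ Pin, F (∑ k ∈ S, D' k) + ∑ S ∈ Pout, F (∑ k ∈ S, D k))) := by ring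
        _ ≤ (((m+1).choose b : ℝ))⁻¹ * ((Pin.card : ℝ) * B) :=
            mul_le_mul_of_nonneg_left hRaw2 (by positivity)
        _ = ((((m+1).choose b : ℝ))⁻¹ * (Pin.card : ℝ)) * B := by ring
        _ = γ * B := by rw [hgam]
    -- γ B ≤ hsDiv
    have hγβ : γ * (α + β) = α - (1 - γ) := by
      rw [hβ, hγ, hKr]
      field_simp
      ring
    have hle := le_hsDiv (by linarith : (0:ℝ) ≤ α)
      (ENNReal.ofReal (1 - γ) • gaussianReal (-(b : ℝ)) ⟨σ ^ 2, sq_nonneg σ⟩ +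
        ENNReal.ofReal γ • gaussianReal (2 - (b : ℝ)) ⟨σ ^ 2, sq_nonneg σ⟩)
      (gaussianReal (-(b : ℝ)) ⟨σ ^ 2, sq_nonneg σ⟩)
      (mix_univ_ne_top σ γ (-(b:ℝ)) (2-(b:ℝ)))
      (measurableSet_Epos (⟨σ^2, sq_nonneg σ⟩ : ℝ≥0) (α+β) (-(b:ℝ)+2) (-(b:ℝ)))
    rw [mix_apply_toReal σ hγ0 hγ1] at hle
    have hγB : γ * B ≤ hsDiv α
        (ENNReal.ofReal (1 - γ) • gaussianReal (-(b : ℝ)) ⟨σ ^ 2, sq_nonneg σ⟩ +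
          ENNReal.ofReal γ • gaussianReal (2 - (b : ℝ)) ⟨σ ^ 2, sq_nonneg σ⟩)
        (gaussianReal (-(b : ℝ)) ⟨σ ^ 2, sq_nonneg σ⟩) := by
      rw [hB]
      rw [he2] at *
      rw [← hEp] at hle
      have : γ * (((gaussianReal (2-(b:ℝ)) (⟨σ^2, sq_nonneg σ⟩ : ℝ≥0)) Ep).toReal
          - (α+β) * ((gaussianReal (-(b:ℝ)) (⟨σ^2, sq_nonneg σ⟩ : ℝ≥0)) Ep).toReal)
          = ((1-γ) * ((gaussianReal (-(b:ℝ)) (⟨σ^2, sq_nonneg σ⟩ : ℝ≥0)) Ep).toReal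
            + γ * ((gaussianReal (2-(b:ℝ)) (⟨σ^2, sq_nonneg σ⟩ : ℝ≥0)) Ep).toReal)
          - α * ((gaussianReal (-(b:ℝ)) (⟨σ^2, sq_nonneg σ⟩ : ℝ≥0)) Ep).toReal := by
        linear_combination (-(((gaussianReal (-(b:ℝ)) (⟨σ^2, sq_nonneg σ⟩ : ℝ≥0)) Ep).toReal)) * hγβ
      rw [this]
      exact hle
    calc _ ≤ γ * B := hraw
      _ ≤ _ := hγB

/-- Worst-case substitution datasets for a single iteration of the without-replacement
subsampled Gaussian mechanism at `ε ≥ 0` (i.e. `α ≥ 1`), with `n = m + 1`, `1 ≤ b ≤ n`, and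
`γ = b/n`: for tuples `D, D' ∈ [−1,1]^n` differing in exactly one entry and `α ≥ 1`,
`H_α(M_{n,b}(D) ‖ M_{n,b}(D')) ≤ H_α((1−γ)N(−b,σ²) + γN(2−b,σ²) ‖ N(−b,σ²))`, and the bound
is realized by `D = (−1,…,−1,1)`, `D' = (−1,…,−1,−1)`. -/
theorem worGauss_substitution_worst_case (σ : ℝ) (hσ : 0 < σ) (m b : ℕ) (hb1 : 1 ≤ b)
    (hbn : b ≤ m + 1) (γ : ℝ) (hγ : γ = (b : ℝ) / (m + 1)) :
    (∀ D D' : Fin (m + 1) → ℝ,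
      (∀ j, D j ∈ Set.Icc (-1 : ℝ) 1) → (∀ j, D' j ∈ Set.Icc (-1 : ℝ) 1) →
      (∃ i : Fin (m + 1), D i ≠ D' i ∧ ∀ j : Fin (m + 1), j ≠ i → D j = D' j) →
      ∀ α : ℝ, 1 ≤ α →
        hsDiv α (worGauss σ b D) (worGauss σ b D') ≤
          hsDiv α
            (ENNReal.ofReal (1 - γ) • gaussianReal (-(b : ℝ)) ⟨σ ^ 2, sq_nonneg σ⟩ +
              ENNReal.ofReal γ • gaussianReal (2 - (b : ℝ)) ⟨σ ^ 2, sq_nonneg σ⟩)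
            (gaussianReal (-(b : ℝ)) ⟨σ ^ 2, sq_nonneg σ⟩)) ∧
    worGauss σ b (Fin.snoc (fun _ : Fin m => (-1 : ℝ)) 1) =
      ENNReal.ofReal (1 - γ) • gaussianReal (-(b : ℝ)) ⟨σ ^ 2, sq_nonneg σ⟩ +
        ENNReal.ofReal γ • gaussianReal (2 - (b : ℝ)) ⟨σ ^ 2, sq_nonneg σ⟩ ∧
    worGauss σ b (fun _ : Fin (m + 1) => (-1 : ℝ)) =
      gaussianReal (-(b : ℝ)) ⟨σ ^ 2, sq_nonneg σ⟩ := by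
  exact ⟨main_ineq σ hσ m b hb1 hbn γ hγ, worGauss_snoc σ m b hb1 hbn γ hγ,
    worGauss_const σ m b hbn⟩
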